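/- arXiv:2007.14358 — 2 statements merged into one kernel-verified Lean document; each statement's English description precedes it below -/
import Mathlib

section
/- For any a ∈ ℝⁿ≥0 with a ≠ 0, the point x = a/‖a‖₁ lies in the simplex Δⁿ and satisfies ⟨a, ⟨ℓ, x⟩1 − ℓ⟩ = 0 for every ℓ ∈ ℝⁿ. In particular, the halfspace H_a = {z ∈ ℝⁿ : ⟨a, z⟩ ≤ 0} is forceable in the regret-matching Blackwell game: there exists x ∈ Δⁿ such that u(x, ℓ) = ⟨ℓ,x⟩1 − ℓ ∈ H_a for all ℓ ∈ ℝⁿ. -/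
open scoped InnerProductSpace BigOperators

/-- The all-ones vector in ℝⁿ. -/
noncomputable def ones (n : ℕ) : EuclideanSpace ℝ (Fin n) := WithLp.toLp 2 (fun _ => (1 : ℝ))

/-- ℓ₁ norm on ℝⁿ. -/
noncomputable def l1 {n : ℕ} (w : EuclideanSpace ℝ (Fin n)) : ℝ := ∑ i, |w i|

/-- For nonzero `a ∈ ℝⁿ≥0`, `x = a/‖a‖₁` lies in the simplex and satisfies
`⟨a, ⟨ℓ,x⟩1 − ℓ⟩ = 0` for every `ℓ`; hence the halfspace `H_a = {z : ⟨a,z⟩ ≤ 0}` is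
forceable: some `x` in the simplex guarantees `u(x,ℓ) = ⟨ℓ,x⟩1 − ℓ ∈ H_a` for all `ℓ`. -/
theorem stmt_12 {n : ℕ} (a : EuclideanSpace ℝ (Fin n))
    (ha : ∀ i, 0 ≤ a i) (hne : a ≠ 0) :
    ((∀ i, 0 ≤ ((l1 a)⁻¹ • a) i) ∧ ∑ i, ((l1 a)⁻¹ • a) i = 1) ∧
    (∀ ℓ : EuclideanSpace ℝ (Fin n),
      ⟪a, ⟪ℓ, (l1 a)⁻¹ • a⟫_ℝ • ones n - ℓ⟫_ℝ = 0) ∧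
    (∃ x : EuclideanSpace ℝ (Fin n), ((∀ i, 0 ≤ x i) ∧ ∑ i, x i = 1) ∧
      ∀ ℓ : EuclideanSpace ℝ (Fin n), ⟪a, ⟪ℓ, x⟫_ℝ • ones n - ℓ⟫_ℝ ≤ 0) := by

  have hl1 : l1 a = ∑ i, a i := by
    unfold l1; exact Finset.sum_congr rfl fun i _ => abs_of_nonneg (ha i)
  have hpos : 0 < l1 a := by
    rw [hl1]
    rcases Function.ne_iff.mp (show a.ofLp ≠ 0 from fun h => hne (by ext i; simp [h])) with ⟨i, hi⟩
    have : 0 < a i := lt_of_le_of_ne (ha i) (Ne.symm hi)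
    exact Finset.sum_pos' (fun j _ => ha j) ⟨i, Finset.mem_univ i, this⟩
  have hsimp : (∀ i, 0 ≤ ((l1 a)⁻¹ • a) i) ∧ ∑ i, ((l1 a)⁻¹ • a) i = 1 := by
    constructor
    · intro i
      exact mul_nonneg (inv_nonneg.mpr hpos.le) (ha i)
    · have : ∑ i, ((l1 a)⁻¹ • a) i = (l1 a)⁻¹ * ∑ i, a i := by
        rw [Finset.mul_sum]; rfl
      rw [this, ← hl1, inv_mul_cancel₀ hpos.ne']
  have key : ∀ ℓ : EuclideanSpace ℝ (Fin n),
      ⟪a, ⟪ℓ, (l1 a)⁻¹ • a⟫_ℝ • ones n - ℓ⟫_ℝ = 0 := by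
    intro ℓ
    have h1 : ⟪ℓ, (l1 a)⁻¹ • a⟫_ℝ = (l1 a)⁻¹ * ∑ i, ℓ i * a i := by
      rw [real_inner_smul_right, PiLp.inner_apply]
      simp [RCLike.inner_apply, mul_comm]
    rw [inner_sub_right, real_inner_smul_right, h1]
    have h2 : ⟪a, ones n⟫_ℝ = ∑ i, a i := by
      rw [PiLp.inner_apply]
      simp [ones, RCLike.inner_apply]
    have h3 : ⟪a, ℓ⟫_ℝ = ∑ i, ℓ i * a i := by
      rw [PiLp.inner_apply]
      simp [RCLike.inner_apply, mul_comm]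
    rw [h2, h3, ← hl1]
    field_simp
    ring
  exact ⟨hsimp, key, ⟨(l1 a)⁻¹ • a, hsimp, fun ℓ => (key ℓ).le⟩⟩
end

section
/- Predictive FTRL regret bound: let φ : D → ℝ≥0 be differentiable and 1-strongly convex w.r.t. ‖·‖ on the closed convex set D ⊆ ℝⁿ, η > 0. Define L⁰ = 0, Lᵗ = Lᵗ⁻¹ + ℓᵗ, and xᵗ = argmin_{x∈D} ⟨Lᵗ⁻¹ + mᵗ, x⟩ + (1/η)φ(x). Then for every x̂ ∈ D and every T, Σₜ₌₁ᵀ ⟨ℓᵗ, xᵗ − x̂⟩ ≤ φ(x̂)/η + η Σₜ₌₁ᵀ ‖ℓᵗ − mᵗ‖*² − (1/(4η)) Σₜ₌₁^{T−1} ‖xᵗ⁺¹ − xᵗ‖². -/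
open scoped InnerProductSpace BigOperators


lemma aux_dual {n : ℕ} (N Nd : EuclideanSpace ℝ (Fin n) → ℝ)
    (hNadd : ∀ x y, N (x + y) ≤ N x + N y)
    (hNsmul : ∀ (c : ℝ) (x), N (c • x) = |c| * N x)
    (hNpos : ∀ x, x ≠ 0 → 0 < N x)
    (hNd : ∀ a, Nd a = sSup {r : ℝ | ∃ x, N x ≤ 1 ∧ r = ⟪a, x⟫_ℝ}) :
    ∀ a u, ⟪a, u⟫_ℝ ≤ Nd a * N u := by
  have hN0 : N 0 = 0 := by simpa using hNsmul 0 0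
  have hNneg : ∀ v, N (-v) = N v := fun v => by simpa using hNsmul (-1) v
  have hNnn : ∀ v, 0 ≤ N v := by
    intro v
    have h := hNadd v (-v)
    rw [hNneg, add_neg_cancel, hN0] at h
    linarith
  -- upper bound : N v ≤ C * ‖v‖
  set C : ℝ := ∑ i : Fin n, N (EuclideanSpace.single i (1:ℝ)) with hC
  have hCnn : 0 ≤ C := Finset.sum_nonneg fun i _ => hNnn _
  have hsumN : ∀ (s : Finset (Fin n)) (f : Fin n → EuclideanSpace ℝ (Fin n)),
      N (∑ i ∈ s, f i) ≤ ∑ i ∈ s, N (f i) := by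
    intro s f
    induction s using Finset.cons_induction with
    | empty => simp [hN0]
    | cons i s his ih =>
      rw [Finset.sum_cons, Finset.sum_cons]
      exact le_trans (hNadd _ _) (by linarith)
  have hrepr : ∀ v : EuclideanSpace ℝ (Fin n), v = ∑ i, (v i) • EuclideanSpace.single i (1:ℝ) := by
    intro v
    ext j
    rw [show (∑ i : Fin n, (v i) • EuclideanSpace.single i (1:ℝ)) j
        = ∑ i : Fin n, ((v i) • EuclideanSpace.single i (1:ℝ)) j from by rw [WithLp.ofLp_sum]; exact Finset.sum_apply _ _ _]
    simp [EuclideanSpace.single_apply]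
  have hcoord : ∀ (v : EuclideanSpace ℝ (Fin n)) (i : Fin n), |v i| ≤ ‖v‖ := by
    intro v i
    have h := abs_real_inner_le_norm (EuclideanSpace.single i (1:ℝ)) v
    simpa [EuclideanSpace.norm_single, EuclideanSpace.inner_single_left] using h
  have hupper : ∀ v, N v ≤ C * ‖v‖ := by
    intro v
    calc N v = N (∑ i, (v i) • EuclideanSpace.single i (1:ℝ)) := by rw [← hrepr]
    _ ≤ ∑ i, N ((v i) • EuclideanSpace.single i (1:ℝ)) := hsumN _ _
    _ = ∑ i, |v i| * N (EuclideanSpace.single i (1:ℝ)) := by simp [hNsmul]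
    _ ≤ ∑ i, ‖v‖ * N (EuclideanSpace.single i (1:ℝ)) :=
        Finset.sum_le_sum fun i _ => mul_le_mul_of_nonneg_right (hcoord v i) (hNnn _)
    _ = ‖v‖ * C := by rw [← Finset.mul_sum]
    _ = C * ‖v‖ := mul_comm _ _
  -- continuity
  have hlip : ∀ a b, |N a - N b| ≤ C * ‖a - b‖ := by
    intro a b
    have h1 : N a ≤ N b + N (a - b) := by
      have h := hNadd b (a - b)
      rw [show b + (a - b) = a by abel] at h
      linarith
    have h2 : N b ≤ N a + N (b - a) := by
      have h := hNadd a (b - a)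
      rw [show a + (b - a) = b by abel] at h
      linarith
    have h3 : N (b - a) = N (a - b) := by rw [← hNneg (a - b), neg_sub]
    rw [abs_sub_le_iff]
    constructor
    · linarith [hupper (a - b)]
    · rw [h3] at h2; linarith [hupper (a - b)]
  have hcont : Continuous N := by
    rw [Metric.continuous_iff]
    intro b ε hε
    refine ⟨ε / (C + 1), by positivity, fun a hab => ?_⟩
    rw [Real.dist_eq]
    calc |N a - N b| ≤ C * ‖a - b‖ := hlip a b
    _ = C * dist a b := by rw [dist_eq_norm]
    _ < (C + 1) * (ε / (C + 1)) := by
        apply lt_of_le_of_lt (mul_le_mul_of_nonneg_right (le_of_lt (lt_add_one C)) dist_nonneg)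
        exact mul_lt_mul_of_pos_left hab (by positivity)
    _ = ε := by field_simp
  -- lower bound
  have hlower : ∃ c : ℝ, 0 < c ∧ ∀ v, c * ‖v‖ ≤ N v := by
    by_cases hn : ∀ v : EuclideanSpace ℝ (Fin n), v = 0
    · exact ⟨1, one_pos, fun v => by rw [hn v]; simp [hN0]⟩
    · push_neg at hn
      obtain ⟨v0, hv0⟩ := hn
      have hsne : (Metric.sphere (0 : EuclideanSpace ℝ (Fin n)) 1).Nonempty := by
        refine ⟨‖v0‖⁻¹ • v0, ?_⟩
        rw [mem_sphere_zero_iff_norm, norm_smul, norm_inv, norm_norm]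
        field_simp [norm_ne_zero_iff.mpr hv0]
      obtain ⟨x0, hx0mem, hx0min⟩ :=
        (isCompact_sphere (0 : EuclideanSpace ℝ (Fin n)) 1).exists_isMinOn hsne hcont.continuousOn
      have hx0norm : ‖x0‖ = 1 := mem_sphere_zero_iff_norm.mp hx0mem
      have hx0ne : x0 ≠ 0 := by intro h; rw [h, norm_zero] at hx0norm; norm_num at hx0norm
      refine ⟨N x0, hNpos x0 hx0ne, fun v => ?_⟩
      by_cases hv : v = 0
      · rw [hv]; simp [hN0]
      · have hnv : (0:ℝ) < ‖v‖ := norm_pos_iff.mpr hv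
        have hmem : ‖v‖⁻¹ • v ∈ Metric.sphere (0 : EuclideanSpace ℝ (Fin n)) 1 := by
          rw [mem_sphere_zero_iff_norm, norm_smul, norm_inv, norm_norm]
          field_simp
        have h : N x0 ≤ N (‖v‖⁻¹ • v) := hx0min hmem
        have hNv : N (‖v‖⁻¹ • v) = ‖v‖⁻¹ * N v := by
          rw [hNsmul, abs_of_pos (by positivity)]
        rw [hNv] at h
        have := mul_le_mul_of_nonneg_left h (le_of_lt hnv)
        calc N x0 * ‖v‖ = ‖v‖ * N x0 := by ring
        _ ≤ ‖v‖ * (‖v‖⁻¹ * N v) := this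
        _ = N v := by field_simp
  obtain ⟨c, hc, hlow⟩ := hlower
  -- bddAbove
  have hbdd : ∀ a, BddAbove {r : ℝ | ∃ x, N x ≤ 1 ∧ r = ⟪a, x⟫_ℝ} := by
    intro a
    refine ⟨‖a‖ * c⁻¹, fun r hr => ?_⟩
    obtain ⟨v, hv1, rfl⟩ := hr
    have h1 : ⟪a, v⟫_ℝ ≤ ‖a‖ * ‖v‖ := real_inner_le_norm a v
    have h2 : ‖v‖ ≤ c⁻¹ := by
      have h3 : c * ‖v‖ ≤ 1 := le_trans (hlow v) hv1
      rw [show (c:ℝ)⁻¹ = 1 / c by ring, le_div_iff₀ hc]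
      linarith
    calc ⟪a, v⟫_ℝ ≤ ‖a‖ * ‖v‖ := h1
    _ ≤ ‖a‖ * c⁻¹ := mul_le_mul_of_nonneg_left h2 (norm_nonneg a)
  intro a u
  by_cases hu : u = 0
  · rw [hu, inner_zero_right, hN0, mul_zero]
  · have hNu : 0 < N u := hNpos u hu
    have hmem : ⟪a, (N u)⁻¹ • u⟫_ℝ ∈ {r : ℝ | ∃ x, N x ≤ 1 ∧ r = ⟪a, x⟫_ℝ} := by
      refine ⟨(N u)⁻¹ • u, ?_, rfl⟩
      rw [hNsmul, abs_of_pos (by positivity)]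
      rw [inv_mul_cancel₀ (ne_of_gt hNu)]
    have h := le_csSup (hbdd a) hmem
    rw [← hNd a] at h
    rw [real_inner_smul_right] at h
    have := mul_le_mul_of_nonneg_left h (le_of_lt hNu)
    calc ⟪a, u⟫_ℝ = N u * ((N u)⁻¹ * ⟪a, u⟫_ℝ) := by field_simp
    _ ≤ N u * Nd a := this
    _ = Nd a * N u := by ring


lemma aux_strong_min {n : ℕ} {D : Set (EuclideanSpace ℝ (Fin n))} (hDconv : Convex ℝ D)
    {N : EuclideanSpace ℝ (Fin n) → ℝ}
    (hNadd : ∀ x y, N (x + y) ≤ N x + N y)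
    (hNsmul : ∀ (c : ℝ) (x), N (c • x) = |c| * N x)
    {φ : EuclideanSpace ℝ (Fin n) → ℝ}
    {gφ : EuclideanSpace ℝ (Fin n) → EuclideanSpace ℝ (Fin n)}
    (hstrong : ∀ x ∈ D, ∀ y ∈ D, φ x + ⟪gφ x, y - x⟫_ℝ + 1 / 2 * (N (y - x)) ^ 2 ≤ φ y)
    {η : ℝ} (hη : 0 < η) (c : EuclideanSpace ℝ (Fin n))
    {z : EuclideanSpace ℝ (Fin n)} (hz : z ∈ D)
    (hmin : IsMinOn (fun y => ⟪c, y⟫_ℝ + 1 / η * φ y) D z) :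
    ∀ y ∈ D, (⟪c, z⟫_ℝ + 1 / η * φ z) + 1 / (2*η) * (N (y - z))^2 ≤ ⟪c, y⟫_ℝ + 1 / η * φ y := by
  intro y hy
  set q := N (y - z) with hq
  have key : ∀ s : ℝ, 0 < s → s ≤ 1 →
      (⟪c, z⟫_ℝ + 1/η * φ z) + (1 - s) * (1/(2*η) * q^2) ≤ ⟪c, y⟫_ℝ + 1/η * φ y := by
    intro s hs hs1
    have hwD : z + s • (y - z) ∈ D := by
      have h := hDconv hz hy (by linarith : (0:ℝ) ≤ 1 - s) (le_of_lt hs) (by ring)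
      have he : z + s • (y - z) = (1 - s) • z + s • y := by module
      rw [he]; exact h
    set w := z + s • (y - z) with hw
    have h1 := hstrong w hwD z hz
    have h2 := hstrong w hwD y hy
    have hzw : z - w = (-s) • (y - z) := by rw [hw]; module
    have hyw : y - w = (1 - s) • (y - z) := by rw [hw]; module
    rw [hzw, real_inner_smul_right, hNsmul] at h1
    rw [hyw, real_inner_smul_right, hNsmul] at h2
    have habs1 : |(-s)| = s := by rw [abs_neg, abs_of_pos hs]
    have habs2 : |(1 - s)| = 1 - s := abs_of_nonneg (by linarith)
    rw [habs1] at h1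
    rw [habs2] at h2
    rw [← hq] at h1 h2
    have hm : ⟪c, z⟫_ℝ + 1 / η * φ z ≤ ⟪c, w⟫_ℝ + 1 / η * φ w := hmin hwD
    have hcw : ⟪c, w⟫_ℝ = ⟪c, z⟫_ℝ + s * (⟪c, y⟫_ℝ - ⟪c, z⟫_ℝ) := by
      rw [hw, inner_add_right, real_inner_smul_right, inner_sub_right]
    set G := ⟪gφ w, y - z⟫_ℝ with hG
    -- h1 : φ w + -s * G + 1/2 * (s * q)^2 ≤ φ z
    -- h2 : φ w + (1-s) * G + 1/2 * ((1-s) * q)^2 ≤ φ y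
    have e1 := mul_le_mul_of_nonneg_left h1 (by linarith : (0:ℝ) ≤ 1 - s)
    have e2 := mul_le_mul_of_nonneg_left h2 (le_of_lt hs)
    have hA : φ w + 1/2 * (s*(1-s)) * q^2 ≤ (1-s) * φ z + s * φ y := by nlinarith [e1, e2]
    have e3 := mul_le_mul_of_nonneg_left hA (by positivity : (0:ℝ) ≤ 1/η)
    rw [hcw] at hm
    have hD : s * ((⟪c, z⟫_ℝ + 1/η * φ z) + (1 - s) * (1/(2*η) * q^2))
        ≤ s * (⟪c, y⟫_ℝ + 1/η * φ y) := by
      have h2η : (1:ℝ)/(2*η) = 1/2 * (1/η) := by ring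
      rw [h2η]
      nlinarith [hm, e3]
    exact le_of_mul_le_mul_left hD hs
  have hK : 0 ≤ 1/(2*η) * q^2 := by positivity
  apply le_of_forall_pos_le_add
  intro ε hε
  set K := 1/(2*η) * q^2 with hKdef
  set s := min 1 (ε / (K + 1)) with hsdef
  have hs : 0 < s := lt_min one_pos (by positivity)
  have hs1 : s ≤ 1 := min_le_left _ _
  have h := key s hs hs1
  have hsK : s * K ≤ ε := by
    have h1 : s ≤ ε / (K + 1) := min_le_right _ _
    have h2 : s * K ≤ (ε / (K + 1)) * K := mul_le_mul_of_nonneg_right h1 hK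
    have h3 : (ε / (K + 1)) * K ≤ ε := by
      rw [div_mul_eq_mul_div, div_le_iff₀ (by positivity)]
      nlinarith [hε.le, hK]
    linarith
  nlinarith [h, hsK]



/-- Predictive FTRL regret bound. With `φ : D → ℝ≥0` differentiable and
1-strongly convex w.r.t. a norm `N` (dual norm `Nd`) on a closed convex `D ⊆ ℝⁿ`, `η > 0`,
`L⁰ = 0`, `Lᵗ = Lᵗ⁻¹ + ℓᵗ`, and `xᵗ = argmin_{x∈D} ⟨Lᵗ⁻¹ + mᵗ, x⟩ + (1/η)φ(x)`, for every
`x̂ ∈ D` and `T`: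
`Σₜ₌₁ᵀ ⟨ℓᵗ, xᵗ − x̂⟩ ≤ φ(x̂)/η + η Σₜ₌₁ᵀ ‖ℓᵗ−mᵗ‖*² − (1/(4η)) Σₜ₌₁^{T−1} ‖xᵗ⁺¹−xᵗ‖²`. -/
theorem stmt_13 {n : ℕ} (D : Set (EuclideanSpace ℝ (Fin n)))
    (hDc : IsClosed D) (hDconv : Convex ℝ D)
    (N Nd : EuclideanSpace ℝ (Fin n) → ℝ)
    (hNadd : ∀ x y, N (x + y) ≤ N x + N y)
    (hNsmul : ∀ (c : ℝ) (x), N (c • x) = |c| * N x)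
    (hNpos : ∀ x, x ≠ 0 → 0 < N x)
    (hNd : ∀ a, Nd a = sSup {r : ℝ | ∃ x, N x ≤ 1 ∧ r = ⟪a, x⟫_ℝ})
    (φ : EuclideanSpace ℝ (Fin n) → ℝ) (hφ0 : ∀ x ∈ D, 0 ≤ φ x)
    (gφ : EuclideanSpace ℝ (Fin n) → EuclideanSpace ℝ (Fin n))
    (hdiff : ∀ x ∈ D, HasGradientAt φ (gφ x) x)
    (hstrong : ∀ x ∈ D, ∀ y ∈ D, φ x + ⟪gφ x, y - x⟫_ℝ + 1 / 2 * (N (y - x)) ^ 2 ≤ φ y)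
    (η : ℝ) (hη : 0 < η)
    (ℓ m L x : ℕ → EuclideanSpace ℝ (Fin n))
    (hL0 : L 0 = 0)
    (hL : ∀ t : ℕ, 1 ≤ t → L t = L (t - 1) + ℓ t)
    (hx : ∀ t : ℕ, 1 ≤ t → x t ∈ D ∧
      IsMinOn (fun y => ⟪L (t - 1) + m t, y⟫_ℝ + 1 / η * φ y) D (x t)) :
    ∀ xhat ∈ D, ∀ T : ℕ,
      ∑ t ∈ Finset.Icc 1 T, ⟪ℓ t, x t - xhat⟫_ℝ ≤
        φ xhat / η + η * ∑ t ∈ Finset.Icc 1 T, (Nd (ℓ t - m t)) ^ 2 -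
          1 / (4 * η) * ∑ t ∈ Finset.Icc 1 (T - 1), (N (x (t + 1) - x t)) ^ 2 := by
  intro xhat hxhat T
  have hN0 : N 0 = 0 := by simpa using hNsmul 0 0
  have hNneg : ∀ v, N (-v) = N v := fun v => by simpa using hNsmul (-1) v
  have hsym : ∀ a b, N (a - b) = N (b - a) := fun a b => by rw [← hNneg (b - a), neg_sub]
  have dual := aux_dual N Nd hNadd hNsmul hNpos hNd
  have SM : ∀ t : ℕ, 1 ≤ t → ∀ y ∈ D,
      (⟪L (t-1) + m t, x t⟫_ℝ + 1 / η * φ (x t)) + 1/(2*η) * (N (y - x t))^2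
        ≤ ⟪L (t-1) + m t, y⟫_ℝ + 1 / η * φ y :=
    fun t ht => aux_strong_min hDconv hNadd hNsmul hstrong hη _ (hx t ht).1 (hx t ht).2
  have hφη : ∀ v, v ∈ D → 0 ≤ 1/η * φ v := fun v hv =>
    mul_nonneg (by positivity) (hφ0 v hv)
  have Sp : ∀ S : ℕ, ∀ xh ∈ D,
      (∑ t ∈ Finset.Icc 1 S, (⟪m t, x t⟫_ℝ + ⟪ℓ t - m t, x (t+1)⟫_ℝ
          + 1/(2*η) * (N (x (t+1) - x t))^2))
        + ⟪m (S+1), x (S+1)⟫_ℝ + 1/(2*η) * (N (xh - x (S+1)))^2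
        ≤ ⟪L S + m (S+1), xh⟫_ℝ + 1 / η * φ xh := by
    intro S
    induction S with
    | zero =>
      intro xh hxh
      have h := SM 1 le_rfl xh hxh
      rw [show (1:ℕ) - 1 = 0 from rfl, hL0] at h
      rw [hL0]
      rw [Finset.Icc_eq_empty (by omega), Finset.sum_empty]
      simp only [zero_add] at h ⊢
      linarith [hφη (x 1) (hx 1 le_rfl).1, h]
    | succ S ih =>
      intro xh hxh
      have hxS2 := hx (S+2) (by omega)
      have h1 := ih (x (S+2)) hxS2.1
      have h2 := SM (S+2) (by omega) xh hxh
      rw [show S+2-1 = S+1 from rfl] at h2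
      have hLr := hL (S+1) (by omega)
      rw [show S+1-1 = S from rfl] at hLr
      rw [Finset.sum_Icc_succ_top (by omega : 1 ≤ S + 1)]
      have e1 : ⟪L (S+1) + m (S+2), x (S+2)⟫_ℝ
          = ⟪L S + m (S+1), x (S+2)⟫_ℝ + ⟪ℓ (S+1) - m (S+1), x (S+2)⟫_ℝ
            + ⟪m (S+2), x (S+2)⟫_ℝ := by
        rw [hLr]; simp only [inner_add_left, inner_sub_left]; ring
      linarith [h1, h2, e1]
  rcases T with _ | S
  · rw [show (0:ℕ) - 1 = 0 from rfl]
    rw [Finset.Icc_eq_empty (by omega : ¬ (1:ℕ) ≤ 0)]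
    simp only [Finset.sum_empty, mul_zero, sub_zero]
    have h1 : 0 ≤ φ xhat / η := div_nonneg (hφ0 xhat hxhat) hη.le
    linarith
  · have hLsum : ∀ k : ℕ, L k = ∑ t ∈ Finset.Icc 1 k, ℓ t := by
      intro k
      induction k with
      | zero => rw [hL0, Finset.Icc_eq_empty (by omega), Finset.sum_empty]
      | succ k ihk =>
        rw [hL (k+1) (by omega), show k+1-1 = k from rfl, ihk,
          Finset.sum_Icc_succ_top (by omega : 1 ≤ k + 1)]
    have hS := Sp S xhat hxhat
    have hterm : ∀ t ∈ Finset.Icc 1 S,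
        ⟪ℓ t - m t, x t - x (t+1)⟫_ℝ - 1/(2*η) * (N (x (t+1) - x t))^2
          ≤ η * (Nd (ℓ t - m t))^2 - 1/(4*η) * (N (x (t+1) - x t))^2 := by
      intro t _
      have hd := dual (ℓ t - m t) (x t - x (t+1))
      rw [hsym (x t) (x (t+1))] at hd
      set a := Nd (ℓ t - m t)
      set b := N (x (t+1) - x t)
      have key : η*a^2 + 1/(4*η)*b^2 - a*b = (2*η*a - b)^2 / (4*η) := by
        field_simp; ring
      have h0 : 0 ≤ (2*η*a - b)^2 / (4*η) := by positivity
      have hrel : 1/(2*η) * b^2 = 2 * (1/(4*η) * b^2) := by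
        field_simp
        ring
      linarith [hd, key, h0, hrel]
    have hQ := Finset.sum_le_sum hterm
    have hlast : ⟪ℓ (S+1) - m (S+1), x (S+1) - xhat⟫_ℝ - 1/(2*η) * (N (xhat - x (S+1)))^2
        ≤ η * (Nd (ℓ (S+1) - m (S+1)))^2 := by
      have hd := dual (ℓ (S+1) - m (S+1)) (x (S+1) - xhat)
      rw [hsym (x (S+1)) xhat] at hd
      set a := Nd (ℓ (S+1) - m (S+1))
      set b := N (xhat - x (S+1))
      have key : 1/(2*η)*b^2 + η*a^2 - a*b = (b - η*a)^2/(2*η) + η/2 * a^2 := by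
        field_simp; ring
      have h0 : 0 ≤ (b - η*a)^2/(2*η) + η/2 * a^2 := by positivity
      linarith [hd, key, h0]
    have hper : ∀ t : ℕ, ⟪ℓ t, x t - xhat⟫_ℝ
        = ((⟪m t, x t⟫_ℝ + ⟪ℓ t - m t, x (t+1)⟫_ℝ + 1/(2*η) * (N (x (t+1) - x t))^2)
          + (⟪ℓ t - m t, x t - x (t+1)⟫_ℝ - 1/(2*η) * (N (x (t+1) - x t))^2))
          - ⟪ℓ t, xhat⟫_ℝ := by
      intro t
      simp only [inner_sub_left, inner_sub_right]
      ring
    have esum : ∑ t ∈ Finset.Icc 1 (S+1), ⟪ℓ t, x t - xhat⟫_ℝ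
        = (∑ t ∈ Finset.Icc 1 S, (⟪m t, x t⟫_ℝ + ⟪ℓ t - m t, x (t+1)⟫_ℝ
            + 1/(2*η) * (N (x (t+1) - x t))^2))
          + (∑ t ∈ Finset.Icc 1 S, (⟪ℓ t - m t, x t - x (t+1)⟫_ℝ
            - 1/(2*η) * (N (x (t+1) - x t))^2))
          - (∑ t ∈ Finset.Icc 1 S, ⟪ℓ t, xhat⟫_ℝ)
          + ⟪ℓ (S+1), x (S+1) - xhat⟫_ℝ := by
      rw [Finset.sum_Icc_succ_top (by omega : 1 ≤ S + 1)]
      rw [Finset.sum_congr rfl (fun t _ => hper t)]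
      rw [Finset.sum_sub_distrib, Finset.sum_add_distrib]
    have eLS : ⟪L S + m (S+1), xhat⟫_ℝ
        = (∑ t ∈ Finset.Icc 1 S, ⟪ℓ t, xhat⟫_ℝ) + ⟪m (S+1), xhat⟫_ℝ := by
      rw [inner_add_left, hLsum S, sum_inner]
    have etop : ⟪ℓ (S+1), x (S+1) - xhat⟫_ℝ
        = ⟪ℓ (S+1) - m (S+1), x (S+1) - xhat⟫_ℝ + ⟪m (S+1), x (S+1)⟫_ℝ
          - ⟪m (S+1), xhat⟫_ℝ := by
      simp only [inner_sub_left, inner_sub_right]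
      ring
    have eR1 : ∑ t ∈ Finset.Icc 1 S, (η * (Nd (ℓ t - m t))^2
          - 1/(4*η) * (N (x (t+1) - x t))^2)
        = η * (∑ t ∈ Finset.Icc 1 S, (Nd (ℓ t - m t))^2)
          - 1/(4*η) * (∑ t ∈ Finset.Icc 1 S, (N (x (t+1) - x t))^2) := by
      rw [Finset.sum_sub_distrib, Finset.mul_sum, Finset.mul_sum]
    have eR2 : η * (∑ t ∈ Finset.Icc 1 (S+1), (Nd (ℓ t - m t))^2)
        = η * (∑ t ∈ Finset.Icc 1 S, (Nd (ℓ t - m t))^2)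
          + η * (Nd (ℓ (S+1) - m (S+1)))^2 := by
      rw [Finset.sum_Icc_succ_top (by omega : 1 ≤ S + 1)]; ring
    have ediv : φ xhat / η = 1/η * φ xhat := by ring
    rw [show S+1-1 = S from rfl]
    have hrel : 1/(2*η) = 2 * (1/(4*η)) := by field_simp; ring
    linarith [hS, hQ, hlast, esum, eLS, etop, eR1, eR2, ediv, hrel]
end
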